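/- arXiv:math/0508244 — 3 statements merged into one kernel-verified Lean document; each statement's English description precedes it below -/
import Mathlib

section
/- Let A ∈ M₂(ℝ) be the matrix with rows (1, 0) and (−c, 1) where c > 0, and let B(μ) = A + μ·E + O(μ²) where the (1,2) entry of E is −C·c′ for constants C and c′ > 0. Then for μ > 0 sufficiently small, the eigenvalues of B(μ) are 1 ± √(C·c·c′·μ) + O(μ). In particular, if C·c·c′ > 0 both eigenvalues are real with one greater than 1 (hyperbolic case), and if C·c·c′ < 0 they are complex conjugates on the unit circle to leading order (elliptic case). -/
open Asymptotics

lemma msAux_csq_sq (x : ℂ) : (x ^ ((1:ℂ)/2)) ^ 2 = x := by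
  have h : (1:ℂ)/2 = ((2:ℕ) : ℂ)⁻¹ := by norm_num
  rw [h]
  exact_mod_cast Complex.cpow_nat_inv_pow x two_ne_zero

lemma msAux_csq_nonneg {x : ℝ} (hx : 0 ≤ x) :
    (x : ℂ) ^ ((1:ℂ)/2) = (Real.sqrt x : ℂ) := by
  have h : ((1:ℂ)/2) = ((1/2 : ℝ) : ℂ) := by norm_num
  rw [h, ← Complex.ofReal_cpow hx, ← Real.sqrt_eq_rpow]

lemma msAux_csq_neg {x : ℝ} (hx : x < 0) :
    (x : ℂ) ^ ((1:ℂ)/2) = Complex.I * (Real.sqrt (-x) : ℂ) := by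
  rw [Complex.ofReal_cpow_of_nonpos hx.le]
  have h1 : ((-(x:ℂ)) : ℂ) = ((-x : ℝ) : ℂ) := by push_cast; ring
  rw [h1, msAux_csq_nonneg (by linarith : (0:ℝ) ≤ -x)]
  have h2 : Complex.exp (Real.pi * Complex.I * ((1:ℂ)/2)) = Complex.I := by
    have : (Real.pi : ℂ) * Complex.I * ((1:ℂ)/2) = ((Real.pi/2 : ℝ) : ℂ) * Complex.I := by
      push_cast; ring
    rw [this, Complex.exp_mul_I, ← Complex.ofReal_cos, ← Complex.ofReal_sin,
      Real.cos_pi_div_two, Real.sin_pi_div_two]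
    simp
  rw [h2]; ring

lemma msAux_sqrt_diff {a b : ℝ} (ha : 0 ≤ a) (hb : 0 ≤ b) :
    |Real.sqrt a - Real.sqrt b| ≤ Real.sqrt |a - b| := by
  wlog h : b ≤ a generalizing a b
  · rw [abs_sub_comm, abs_sub_comm a b]; exact this hb ha (by linarith)
  have key : Real.sqrt a ≤ Real.sqrt (a - b) + Real.sqrt b := by
    rw [← Real.sqrt_sq (by positivity : (0:ℝ) ≤ Real.sqrt (a-b) + Real.sqrt b)]
    apply Real.sqrt_le_sqrt
    have h1 : Real.sqrt (a-b) ^ 2 = a - b := Real.sq_sqrt (by linarith)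
    have h2 : Real.sqrt b ^ 2 = b := Real.sq_sqrt hb
    nlinarith [Real.sqrt_nonneg (a-b), Real.sqrt_nonneg b]
  have hs : Real.sqrt b ≤ Real.sqrt a := Real.sqrt_le_sqrt h
  rw [abs_of_nonneg (by linarith), abs_of_nonneg (by linarith)]
  linarith

lemma msAux_csq_diff (a b : ℝ) :
    ‖(a : ℂ) ^ ((1:ℂ)/2) - (b : ℂ) ^ ((1:ℂ)/2)‖ ≤ Real.sqrt |a - b| := by
  rcases le_or_gt 0 a with ha | ha <;> rcases le_or_gt 0 b with hb | hb
  · rw [msAux_csq_nonneg ha, msAux_csq_nonneg hb, ← Complex.ofReal_sub, Complex.norm_real, Real.norm_eq_abs]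
    exact msAux_sqrt_diff ha hb
  · rw [msAux_csq_nonneg ha, msAux_csq_neg hb]
    have : (Real.sqrt a : ℂ) - Complex.I * (Real.sqrt (-b) : ℂ)
        = (Real.sqrt a : ℂ) + ((-Real.sqrt (-b) : ℝ) : ℂ) * Complex.I := by push_cast; ring
    rw [this, Complex.norm_add_mul_I]
    have hab : |a - b| = a + -b := by rw [abs_of_nonneg (by linarith)]; ring
    rw [hab]
    apply Real.sqrt_le_sqrt
    have := Real.sq_sqrt ha
    have := Real.sq_sqrt (by linarith : (0:ℝ) ≤ -b)
    nlinarith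
  · rw [msAux_csq_neg ha, msAux_csq_nonneg hb]
    have : Complex.I * (Real.sqrt (-a) : ℂ) - (Real.sqrt b : ℂ)
        = ((-Real.sqrt b : ℝ) : ℂ) + ((Real.sqrt (-a) : ℝ) : ℂ) * Complex.I := by push_cast; ring
    rw [this, Complex.norm_add_mul_I]
    have hab : |a - b| = -a + b := by rw [abs_of_nonpos (by linarith)]; ring
    rw [hab]
    apply Real.sqrt_le_sqrt
    have := Real.sq_sqrt hb
    have := Real.sq_sqrt (by linarith : (0:ℝ) ≤ -a)
    nlinarith
  · rw [msAux_csq_neg ha, msAux_csq_neg hb]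
    have : Complex.I * (Real.sqrt (-a) : ℂ) - Complex.I * (Real.sqrt (-b) : ℂ)
        = Complex.I * ((Real.sqrt (-a) - Real.sqrt (-b) : ℝ) : ℂ) := by push_cast; ring
    rw [this, norm_mul, Complex.norm_I, one_mul, Complex.norm_real, Real.norm_eq_abs]
    have h := msAux_sqrt_diff (by linarith : (0:ℝ) ≤ -a) (by linarith : (0:ℝ) ≤ -b)
    have heq : |(-a) - (-b)| = |a - b| := by rw [abs_sub_comm]; congr 1; ring
    rwa [heq] at h

lemma msAux_root (M : Matrix (Fin 2) (Fin 2) ℂ) (z : ℂ)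
    (h : z ^ 2 - (M 0 0 + M 1 1) * z + M.det = 0) : M.charpoly.IsRoot z := by
  have hd := Matrix.det_fin_two M
  unfold Matrix.charpoly
  rw [Matrix.det_fin_two]
  simp only [Matrix.charmatrix_apply_eq, Matrix.charmatrix_apply_ne M 0 1 (by decide),
    Matrix.charmatrix_apply_ne M 1 0 (by decide), Polynomial.IsRoot, Polynomial.eval_sub,
    Polynomial.eval_mul, Polynomial.eval_neg, Polynomial.eval_X, Polynomial.eval_C]
  linear_combination h - hd

lemma msAux_isBigO_id {f : ℝ → ℝ} {d : ℝ} (h0 : f 0 = 0) (hd : HasDerivAt f d 0) :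
    f =O[nhds 0] fun μ => μ := by
  have h := (hasDerivAt_iff_isLittleO.mp hd).isBigO
  simp only [h0, sub_zero, smul_eq_mul] at h
  have h2 : (fun x : ℝ => x * d) =O[nhds 0] fun μ => μ :=
    IsBigO.of_bound |d| (Filter.Eventually.of_forall fun x => by
      simp [abs_mul, mul_comm])
  calc f = fun x => (f x - x * d) + x * d := by funext x; ring
  _ =O[nhds 0] fun μ => μ := h.add h2

lemma msAux_isBigO_sq {g : ℝ → ℝ} (hg : AnalyticAt ℝ g 0) (h0 : g 0 = 0)
    (hd : HasDerivAt g 0 0) : g =O[nhds 0] fun μ => μ ^ 2 := by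
  obtain ⟨p, hp⟩ := hg
  have hc0 : p.coeff 0 = 0 := by
    show p 0 1 = 0
    rw [hp.coeff_zero 1, h0]
  have hc1 : p.coeff 1 = 0 := by
    show (p 1 fun _ => 1) = 0
    rw [← hp.deriv, hd.deriv]
  have hO := hp.isBigO_sub_partialSum_pow 2
  have hps : ∀ y : ℝ, p.partialSum 2 y = 0 := by
    intro y
    simp [FormalMultilinearSeries.partialSum, Finset.sum_range_succ,
      FormalMultilinearSeries.apply_eq_pow_smul_coeff, hc0, hc1]
  have hgg : (fun y : ℝ => g (0 + y) - p.partialSum 2 y) = g := by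
    funext y; simp [hps y]
  rw [hgg] at hO
  exact hO.congr' (Filter.Eventually.of_forall fun x => rfl)
    (Filter.Eventually.of_forall fun x => by simp [sq_abs])

lemma msAux_castO {l : Filter ℝ} {f : ℝ → ℝ} (h : f =O[l] fun μ => μ) :
    (fun μ => ((f μ : ℝ) : ℂ)) =O[l] fun μ : ℝ => (μ : ℂ) := by
  have c1 : (fun μ : ℝ => ((f μ : ℝ) : ℂ)) =O[l] f :=
    IsBigO.of_bound 1 (Filter.Eventually.of_forall fun x => by
      simp [Complex.norm_real])
  have c2 : (fun μ : ℝ => μ) =O[l] fun μ : ℝ => (μ : ℂ) :=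
    IsBigO.of_bound 1 (Filter.Eventually.of_forall fun x => by
      simp [Complex.norm_real])
  exact (c1.trans h).trans c2

/-- Eigenvalue splitting of a perturbed unipotent shear: if B(0) is the shear
with lower-left entry -c, det B(μ) = 1, and the (0,1) entry of B'(0) is -C·c',
then for small μ > 0 the eigenvalues of B(μ) are 1 ± √(C·c·c'·μ) + O(μ). -/
theorem multiplier_splitting
    (C c c' : ℝ) (hc : 0 < c) (hc' : 0 < c')
    (A : Matrix (Fin 2) (Fin 2) ℝ) (hA : A = !![1, 0; -c, 1])
    (B : ℝ → Matrix (Fin 2) (Fin 2) ℝ)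
    (E : Matrix (Fin 2) (Fin 2) ℝ)
    (hB0 : B 0 = A)
    (hdet : ∀ μ, (B μ).det = 1)
    (hanalytic : ∀ i j, AnalyticAt ℝ (fun μ => B μ i j) 0)
    (hderiv : ∀ i j, HasDerivAt (fun μ => B μ i j) (E i j) 0)
    (hE : E 0 1 = -C * c') :
    ∃ (ε : ℝ) (E₁ E₂ : ℝ → ℂ), 0 < ε ∧
      (E₁ =O[nhdsWithin 0 (Set.Ioi 0)] fun μ : ℝ => (μ : ℂ)) ∧
      (E₂ =O[nhdsWithin 0 (Set.Ioi 0)] fun μ : ℝ => (μ : ℂ)) ∧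
      ∀ μ ∈ Set.Ioo (0:ℝ) ε,
        ((B μ).map (Complex.ofReal)).charpoly.IsRoot
            (1 + (((C*c*c'*μ : ℝ) : ℂ)) ^ ((1:ℂ)/2) + E₁ μ) ∧
        ((B μ).map (Complex.ofReal)).charpoly.IsRoot
            (1 - (((C*c*c'*μ : ℝ) : ℂ)) ^ ((1:ℂ)/2) + E₂ μ) := by
  set k : ℝ := C * c * c' with hk
  -- entries of B 0
  have b00 : B 0 0 0 = 1 := by rw [hB0, hA]; simp
  have b01 : B 0 0 1 = 0 := by rw [hB0, hA]; simp
  have b10 : B 0 1 0 = -c := by rw [hB0, hA]; simp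
  have b11 : B 0 1 1 = 1 := by rw [hB0, hA]; simp
  -- trace function
  set t : ℝ → ℝ := fun μ => B μ 0 0 + B μ 1 1 with ht_def
  have t0 : t 0 = 2 := by show B 0 0 0 + B 0 1 1 = 2; rw [b00, b11]; norm_num
  have ht : AnalyticAt ℝ t 0 := (hanalytic 0 0).add (hanalytic 1 1)
  -- trace derivative equals k, from det ≡ 1
  have hsum : E 0 0 + E 1 1 = k := by
    have hf : HasDerivAt (fun μ => B μ 0 0 * B μ 1 1 - B μ 0 1 * B μ 1 0)
        ((E 0 0 * B 0 1 1 + B 0 0 0 * E 1 1) - (E 0 1 * B 0 1 0 + B 0 0 1 * E 1 0)) 0 :=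
      ((hderiv 0 0).mul (hderiv 1 1)).sub ((hderiv 0 1).mul (hderiv 1 0))
    have hconst : (fun μ => B μ 0 0 * B μ 1 1 - B μ 0 1 * B μ 1 0) = fun _ => (1:ℝ) := by
      funext μ
      rw [← Matrix.det_fin_two (B μ), hdet μ]
    rw [hconst] at hf
    have hzero := hf.unique (hasDerivAt_const 0 1)
    rw [b00, b01, b10, b11, hE] at hzero
    rw [hk]; linarith [hzero]
  have htd : HasDerivAt t k 0 := by
    have := (hderiv 0 0).add (hderiv 1 1)
    rwa [hsum] at this
  -- discriminant function
  set D : ℝ → ℝ := fun μ => t μ * t μ * (4:ℝ)⁻¹ - 1 with hD_def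
  have hDa : AnalyticAt ℝ D 0 := ((ht.mul ht).mul analyticAt_const).sub analyticAt_const
  have hDd : HasDerivAt D k 0 := by
    have h := ((htd.mul htd).mul_const (4:ℝ)⁻¹).sub_const 1
    have e : (k * t 0 + t 0 * k) * (4:ℝ)⁻¹ = k := by rw [t0]; ring
    rw [e] at h; exact h
  -- the remainder function g = D - k·μ is O(μ²)
  set g : ℝ → ℝ := fun μ => D μ - k * μ with hg_def
  have hg0 : g 0 = 0 := by simp [hg_def, hD_def, t0]; norm_num
  have hgd : HasDerivAt g 0 0 := by
    have h := hDd.sub ((hasDerivAt_id (0:ℝ)).const_mul k)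
    have e : k - k * 1 = 0 := by ring
    rw [e] at h; exact h
  have hga : AnalyticAt ℝ g 0 := hDa.sub (analyticAt_const.mul analyticAt_id)
  have hgO : g =O[nhds 0] fun μ => μ ^ 2 := msAux_isBigO_sq hga hg0 hgd
  -- square roots
  set s : ℝ → ℂ := fun μ => ((D μ : ℝ) : ℂ) ^ ((1:ℂ)/2) with hs_def
  set r : ℝ → ℂ := fun μ => ((k * μ : ℝ) : ℂ) ^ ((1:ℂ)/2) with hr_def
  have hsr : ∀ μ, ‖s μ - r μ‖ ≤ Real.sqrt |g μ| := by
    intro μ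
    exact msAux_csq_diff (D μ) (k * μ)
  -- s - r = O(μ)
  have hsrO : (fun μ => s μ - r μ) =O[nhds 0] fun μ : ℝ => (μ : ℂ) := by
    obtain ⟨c₀, hc₀⟩ := hgO.bound
    apply IsBigO.of_bound (Real.sqrt |c₀|)
    filter_upwards [hc₀] with μ hμ
    have h1 : ‖s μ - r μ‖ ≤ Real.sqrt |g μ| := hsr μ
    have h2 : |g μ| ≤ |c₀| * μ ^ 2 := by
      have : ‖g μ‖ ≤ c₀ * ‖μ ^ 2‖ := hμ
      rw [Real.norm_eq_abs, Real.norm_eq_abs, abs_pow, sq_abs] at this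
      nlinarith [abs_nonneg (g μ), le_abs_self c₀, sq_nonneg μ]
    have h3 : Real.sqrt |g μ| ≤ Real.sqrt (|c₀| * μ ^ 2) := Real.sqrt_le_sqrt h2
    have h4 : Real.sqrt (|c₀| * μ ^ 2) = Real.sqrt |c₀| * |μ| := by
      rw [Real.sqrt_mul (abs_nonneg c₀), Real.sqrt_sq_eq_abs]
    have h5 : ‖(μ:ℂ)‖ = |μ| := by simp [Complex.norm_real]
    calc ‖s μ - r μ‖ = ‖s μ - r μ‖ := rfl
    _ ≤ Real.sqrt |g μ| := h1
    _ ≤ Real.sqrt |c₀| * |μ| := by rw [← h4]; exact h3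
    _ = Real.sqrt |c₀| * ‖(μ:ℂ)‖ := by rw [h5]
  -- trace remainder
  have hhf0 : (fun μ => t μ * 2⁻¹ - 1) 0 = 0 := by show t 0 * 2⁻¹ - 1 = 0; rw [t0]; norm_num
  have hhfd : HasDerivAt (fun μ => t μ * 2⁻¹ - 1) (k * 2⁻¹) 0 :=
    (htd.mul_const _).sub_const 1
  have htO : (fun μ => ((t μ * 2⁻¹ - 1 : ℝ) : ℂ)) =O[nhds 0] fun μ : ℝ => (μ : ℂ) :=
    msAux_castO (msAux_isBigO_id hhf0 hhfd)
  -- error functions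
  refine ⟨1, fun μ => ((t μ * 2⁻¹ - 1 : ℝ) : ℂ) + (s μ - r μ),
      fun μ => ((t μ * 2⁻¹ - 1 : ℝ) : ℂ) - (s μ - r μ), one_pos, ?_, ?_, ?_⟩
  · exact ((htO.add hsrO).mono nhdsWithin_le_nhds)
  · exact ((htO.sub hsrO).mono nhdsWithin_le_nhds)
  · intro μ _
    have hdetM : ((B μ).map Complex.ofReal).det = 1 := by
      rw [show ((B μ).map Complex.ofReal) = Complex.ofRealHom.mapMatrix (B μ) from rfl,
        ← RingHom.map_det, hdet]
      simp
    have hM00 : ((B μ).map Complex.ofReal) 0 0 = ((B μ 0 0 : ℝ) : ℂ) := rfl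
    have hM11 : ((B μ).map Complex.ofReal) 1 1 = ((B μ 1 1 : ℝ) : ℂ) := rfl
    have hs2 : (s μ) ^ 2 = ((t μ : ℂ) * (t μ : ℂ) * (4:ℂ)⁻¹ - 1) := by
      rw [hs_def]
      rw [msAux_csq_sq ((D μ : ℝ) : ℂ)]
      rw [hD_def]
      push_cast
      ring
    constructor
    · apply msAux_root
      rw [hM00, hM11, hdetM]
      have hz : (1 : ℂ) + ((C*c*c'*μ : ℝ) : ℂ) ^ ((1:ℂ)/2)
          + (((t μ * 2⁻¹ - 1 : ℝ) : ℂ) + (s μ - r μ)) = (t μ : ℂ) * 2⁻¹ + s μ := by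
        rw [hr_def]
        have : ((C*c*c'*μ : ℝ) : ℂ) = ((k * μ : ℝ) : ℂ) := by rw [hk]
        rw [this]
        push_cast
        ring
      rw [hz]
      have hT : ((B μ 0 0 : ℝ) : ℂ) + ((B μ 1 1 : ℝ) : ℂ) = (t μ : ℂ) := by
        rw [ht_def]; push_cast; ring
      rw [hT]
      linear_combination hs2
    · apply msAux_root
      rw [hM00, hM11, hdetM]
      have hz : (1 : ℂ) - ((C*c*c'*μ : ℝ) : ℂ) ^ ((1:ℂ)/2)
          + (((t μ * 2⁻¹ - 1 : ℝ) : ℂ) - (s μ - r μ)) = (t μ : ℂ) * 2⁻¹ - s μ := by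
        rw [hr_def]
        have : ((C*c*c'*μ : ℝ) : ℂ) = ((k * μ : ℝ) : ℂ) := by rw [hk]
        rw [this]
        push_cast
        ring
      rw [hz]
      have hT : ((B μ 0 0 : ℝ) : ℂ) + ((B μ 1 1 : ℝ) : ℂ) = (t μ : ℂ) := by
        rw [ht_def]; push_cast; ring
      rw [hT]
      linear_combination hs2
end

section
/- Let f(x) be real-analytic at x₀ ≠ 0 and let D denote the operator x·d/dx. Then for |δ| sufficiently small, f((1+δ)x₀) = Σ_{k=0}^{∞} binom(D, k)(f)(x₀)·δ^k, where binom(D,k) = D(D−1)⋯(D−k+1)/k!; i.e., the binomial expansion (1+δ)^D applied to f at x₀ converges to f((1+δ)x₀). -/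
/-- Iterated Euler operator falling factorial: D(D-1)⋯(D-k+1) where D = x d/dx. -/
noncomputable def eulerFalling : ℕ → (ℝ → ℝ) → (ℝ → ℝ)
  | 0, f => f
  | (k+1), f => fun x => x * deriv (eulerFalling k f) x - (k:ℝ) * eulerFalling k f x

private lemma analyticAt_deriv {f : ℝ → ℝ} {x : ℝ} (hf : AnalyticAt ℝ f x) :
    AnalyticAt ℝ (deriv f) x := by
  have : deriv f = fun y => (ContinuousLinearMap.apply ℝ ℝ (1:ℝ)) (fderiv ℝ f y) := by
    funext y
    simp [ContinuousLinearMap.apply_apply, fderiv_apply_one_eq_deriv]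
  rw [this]
  exact ((ContinuousLinearMap.apply ℝ ℝ (1:ℝ)).analyticAt _).comp hf.fderiv

private lemma analyticAt_iteratedDeriv {f : ℝ → ℝ} {x : ℝ} (hf : AnalyticAt ℝ f x) (k : ℕ) :
    AnalyticAt ℝ (iteratedDeriv k f) x := by
  induction k generalizing f with
  | zero => simpa [iteratedDeriv_zero] using hf
  | succ k ih =>
    rw [iteratedDeriv_succ']
    exact ih (analyticAt_deriv hf)

private lemma eulerFalling_eq (k : ℕ) : ∀ (f : ℝ → ℝ) (x : ℝ), AnalyticAt ℝ f x →
    eulerFalling k f x = x ^ k * iteratedDeriv k f x := by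
  induction k with
  | zero => intro f x _; simp [eulerFalling, iteratedDeriv_zero]
  | succ k ih =>
    intro f x hfx
    have hEq : deriv (eulerFalling k f) x
        = deriv (fun y => y ^ k * iteratedDeriv k f y) x := by
      apply Filter.EventuallyEq.deriv_eq
      filter_upwards [hfx.eventually_analyticAt] with y hy
      exact ih f y hy
    have hg : DifferentiableAt ℝ (iteratedDeriv k f) x :=
      (analyticAt_iteratedDeriv hfx k).differentiableAt
    have hderiv : deriv (fun y => y ^ k * iteratedDeriv k f y) x
        = (k : ℝ) * x ^ (k - 1) * iteratedDeriv k f x + x ^ k * iteratedDeriv (k+1) f x := by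
      rw [deriv_fun_mul (differentiableAt_pow k) hg, deriv_pow_field, iteratedDeriv_succ]
    have key : x * x ^ (k - 1) * (k:ℝ) = (k:ℝ) * x ^ k := by
      cases k with
      | zero => simp
      | succ m => rw [Nat.succ_sub_one, ← pow_succ']; push_cast; ring
    show x * deriv (eulerFalling k f) x - (k:ℝ) * eulerFalling k f x = _
    rw [hEq, hderiv, ih f x hfx, pow_succ']
    linear_combination (iteratedDeriv k f x) * key

/-- For f analytic at x₀ ≠ 0 and |δ| small,
f((1+δ)x₀) = Σ_k binom(D,k)f(x₀) δ^k where D = x d/dx. -/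
theorem euler_operator_binomial_expansion
    (f : ℝ → ℝ) (x₀ : ℝ) (hx : x₀ ≠ 0) (hf : AnalyticAt ℝ f x₀) :
    ∃ ε > (0:ℝ), ∀ δ : ℝ, |δ| < ε →
      HasSum (fun k : ℕ => eulerFalling k f x₀ / k.factorial * δ^k)
        (f ((1 + δ) * x₀)) := by
  obtain ⟨p, r, hp⟩ := hf
  obtain ⟨r', hr'0, hr'r⟩ := ENNReal.lt_iff_exists_nnreal_btwn.mp hp.r_pos
  refine ⟨(r' : ℝ) / |x₀|, div_pos (by exact_mod_cast hr'0) (abs_pos.mpr hx), fun δ hδ => ?_⟩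
  have hmem : δ * x₀ ∈ Metric.eball (0:ℝ) r := by
    rw [EMetric.mem_ball, edist_zero_right]
    have h1 : ‖δ * x₀‖ < (r' : ℝ) := by
      rw [norm_mul, Real.norm_eq_abs, Real.norm_eq_abs]
      calc |δ| * |x₀| < ((r' : ℝ) / |x₀|) * |x₀| := by
            apply mul_lt_mul_of_pos_right hδ (abs_pos.mpr hx)
        _ = (r' : ℝ) := div_mul_cancel₀ _ (by positivity)
    calc (‖δ * x₀‖₊ : ENNReal) < (r' : ENNReal) := by
          exact_mod_cast h1
      _ < r := hr'r
  have hsum := hp.hasSum_iteratedFDeriv hmem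
  have hx' : x₀ + δ * x₀ = (1 + δ) * x₀ := by ring
  rw [hx'] at hsum
  convert hsum using 2 with k
  · rfl
  rw [iteratedFDeriv_apply_eq_iteratedDeriv_mul_prod]
  have hef : eulerFalling k f x₀ = x₀ ^ k * iteratedDeriv k f x₀ :=
    eulerFalling_eq k f x₀ ⟨p, r, hp⟩
  simp only [Finset.prod_const, Finset.card_univ, Fintype.card_fin, smul_eq_mul,
    mul_pow, hef]
  field_simp
end

section
/- Let G ≠ 0, C < 0, and fixed K with G+2C < 0, K+1 > 0, and (K+1)² + G²(G+2C)/4 > 0. With r_min² + r_max² = 2(K+1)/(−G−2C) and r_min²·r_max² = G²/(4(−G−2C)), the action integral (1/π)∫_{r_min}^{r_max} √(8K+8 − G²/r² + 4r²(G+2C)) dr equals (K+1)/√(−G−2C) − |G|/2. -/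
open Real

lemma sqrtP_integral (a b c rmin rmax : ℝ) (hrmin : 0 < rmin) (hlt : rmin < rmax)
    (ha2 : rmin^2 = a) (hb2 : rmax^2 = b) (ha : 0 < a)
    (hc_def : c = Real.sqrt (a*b)) :
    ∫ r in rmin..rmax, Real.sqrt ((b - r^2)*(r^2 - a)) / r
      = π * ((a+b)/2 - c) / 2 := by
  have hrmax : 0 < rmax := hrmin.trans hlt
  have hab : a < b := by
    rw [← ha2, ← hb2]; exact pow_lt_pow_left₀ hlt hrmin.le two_ne_zero
  have hb : 0 < b := ha.trans hab
  have hba : 0 < b - a := by linarith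
  have hcpos : 0 < c := by rw [hc_def]; positivity
  have hc : c^2 = a*b := by rw [hc_def]; exact Real.sq_sqrt (by positivity)
  set F : ℝ → ℝ := fun r =>
    (1/2) * (Real.sqrt ((b - r^2)*(r^2 - a))
      + ((a+b)/2) * Real.arcsin ((2*r^2 - a - b)/(b - a))
      - c * Real.arcsin (((a+b)*r^2 - 2*a*b)/((b-a)*r^2))) with hF_def
  have hFc : ContinuousOn F (Set.Icc rmin rmax) := by
    apply ContinuousOn.mul continuousOn_const
    apply ContinuousOn.sub
    · apply ContinuousOn.add
      · exact Real.continuous_sqrt.comp_continuousOn (by fun_prop)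
      · exact ContinuousOn.mul continuousOn_const
          (Real.continuous_arcsin.comp_continuousOn (by fun_prop))
    · apply ContinuousOn.mul continuousOn_const
      apply Real.continuous_arcsin.comp_continuousOn
      exact ContinuousOn.div (by fun_prop) (by fun_prop)
        (fun x hx => by have : 0 < x := lt_of_lt_of_le hrmin hx.1; positivity)
  have hfc : ContinuousOn (fun r => Real.sqrt ((b - r^2)*(r^2 - a)) / r)
      (Set.Icc rmin rmax) := by
    apply ContinuousOn.div
    · exact Real.continuous_sqrt.comp_continuousOn (by fun_prop)
    · fun_prop
    · exact fun x hx => (lt_of_lt_of_le hrmin hx.1).ne'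
  have hderiv : ∀ x ∈ Set.Ioo rmin rmax,
      HasDerivAt F (Real.sqrt ((b - x^2)*(x^2 - a)) / x) x := by
    intro x hx
    have hx0 : 0 < x := hrmin.trans hx.1
    have hxa : a < x^2 := by
      rw [← ha2]; exact pow_lt_pow_left₀ hx.1 hrmin.le two_ne_zero
    have hxb : x^2 < b := by
      rw [← hb2]; exact pow_lt_pow_left₀ hx.2 hx0.le two_ne_zero
    have hP : 0 < (b - x^2)*(x^2 - a) := mul_pos (by linarith) (by linarith)
    obtain ⟨q, hq_def⟩ : ∃ q, q = Real.sqrt ((b - x^2)*(x^2 - a)) := ⟨_, rfl⟩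
    have hqpos : 0 < q := hq_def ▸ Real.sqrt_pos.mpr hP
    have hq : q^2 = (b - x^2)*(x^2 - a) := by rw [hq_def]; exact Real.sq_sqrt hP.le
    -- term 1
    have d1 : HasDerivAt (fun r : ℝ => (b - r^2)*(r^2 - a)) (2*x*(a + b - 2*x^2)) x := by
      have := (((hasDerivAt_pow 2 x).const_sub b).mul ((hasDerivAt_pow 2 x).sub_const a))
      exact HasDerivAt.congr_deriv this (Eq.symm (by ring))
    have T1 : HasDerivAt (fun r : ℝ => Real.sqrt ((b - r^2)*(r^2 - a)))
        (2*x*(a + b - 2*x^2) / (2*q)) x := by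
      rw [hq_def]; exact d1.sqrt hP.ne'
    -- term 2
    have hw1 : (2*x^2 - a - b)/(b-a) ≠ -1 := by
      intro h; rw [div_eq_iff hba.ne'] at h; nlinarith
    have hw2 : (2*x^2 - a - b)/(b-a) ≠ 1 := by
      intro h; rw [div_eq_iff hba.ne'] at h; nlinarith
    have dw : HasDerivAt (fun r : ℝ => (2*r^2 - a - b)/(b-a)) (4*x/(b-a)) x := by
      have := ((((hasDerivAt_pow 2 x).const_mul 2).sub_const a).sub_const b).div_const (b-a)
      exact HasDerivAt.congr_deriv this (Eq.symm (by ring))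
    have hw3 : Real.sqrt (1 - ((2*x^2 - a - b)/(b-a))^2) = 2*q/(b-a) := by
      rw [show 1 - ((2*x^2 - a - b)/(b-a))^2 = (2*q/(b-a))^2 by
        have e1 : (2*q/(b-a))^2 = 4*((b - x^2)*(x^2 - a))/(b-a)^2 := by
          rw [div_pow, mul_pow, hq]; norm_num
        rw [e1]; field_simp; ring]
      exact Real.sqrt_sq (by positivity)
    have T2 : HasDerivAt (fun r : ℝ => Real.arcsin ((2*r^2 - a - b)/(b-a)))
        (1 / (2*q/(b-a)) * (4*x/(b-a))) x := by
      have := (Real.hasDerivAt_arcsin hw1 hw2).comp x dw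
      rwa [hw3] at this
    -- term 3
    have hdenx : (b-a)*x^2 ≠ 0 := by positivity
    have hv1 : ((a+b)*x^2 - 2*a*b)/((b-a)*x^2) ≠ -1 := by
      intro h; rw [div_eq_iff hdenx] at h; nlinarith
    have hv2 : ((a+b)*x^2 - 2*a*b)/((b-a)*x^2) ≠ 1 := by
      intro h; rw [div_eq_iff hdenx] at h; nlinarith
    have dv : HasDerivAt (fun r : ℝ => ((a+b)*r^2 - 2*a*b)/((b-a)*r^2))
        (4*a*b/((b-a)*x^3)) x := by
      have hnum : HasDerivAt (fun r : ℝ => (a+b)*r^2 - 2*a*b) ((a+b)*(2*x)) x := by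
        have := ((hasDerivAt_pow 2 x).const_mul (a+b)).sub_const (2*a*b)
        exact HasDerivAt.congr_deriv this (Eq.symm (by ring))
      have hden : HasDerivAt (fun r : ℝ => (b-a)*r^2) ((b-a)*(2*x)) x := by
        have := (hasDerivAt_pow 2 x).const_mul (b-a)
        exact HasDerivAt.congr_deriv this (Eq.symm (by ring))
      have := hnum.div hden hdenx
      refine HasDerivAt.congr_deriv this (Eq.symm ?_)
      field_simp
      ring
    have hv3 : Real.sqrt (1 - (((a+b)*x^2 - 2*a*b)/((b-a)*x^2))^2)
        = 2*c*q/((b-a)*x^2) := by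
      rw [show 1 - (((a+b)*x^2 - 2*a*b)/((b-a)*x^2))^2 = (2*c*q/((b-a)*x^2))^2 by
        have e2 : (2*c*q/((b-a)*x^2))^2
            = 4*(a*b)*((b - x^2)*(x^2 - a))/((b-a)*x^2)^2 := by
          rw [div_pow, mul_pow, mul_pow, hq, hc]; norm_num
        rw [e2]; field_simp; ring]
      exact Real.sqrt_sq (by positivity)
    have T3 : HasDerivAt (fun r : ℝ => Real.arcsin (((a+b)*r^2 - 2*a*b)/((b-a)*r^2)))
        (1 / (2*c*q/((b-a)*x^2)) * (4*a*b/((b-a)*x^3))) x := by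
      have := (Real.hasDerivAt_arcsin hv1 hv2).comp x dv
      rwa [hv3] at this
    have Hder := (((T1.add (T2.const_mul ((a+b)/2))).sub
        (T3.const_mul c)).const_mul (1/2 : ℝ))
    refine HasDerivAt.congr_deriv Hder (Eq.symm ?_)
    rw [← hq_def]
    field_simp
    linear_combination 8 * hq
  have key : (∫ r in rmin..rmax, Real.sqrt ((b - r^2)*(r^2 - a)) / r)
      = F rmax - F rmin := by
    apply intervalIntegral.integral_eq_sub_of_hasDeriv_right_of_le hlt.le hFc
    · exact fun x hx => (hderiv x hx).hasDerivWithinAt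
    · exact (hfc.mono (by rw [Set.uIcc_of_le hlt.le])).intervalIntegrable
  rw [key, hF_def]
  simp only
  rw [show (b - rmax^2)*(rmax^2 - a) = 0 by rw [hb2]; ring,
    show (2*rmax^2 - a - b)/(b-a) = 1 by rw [hb2, div_eq_one_iff_eq hba.ne']; ring,
    show ((a+b)*rmax^2 - 2*a*b)/((b-a)*rmax^2) = 1 by
      rw [hb2, div_eq_one_iff_eq (by positivity)]; ring,
    show (b - rmin^2)*(rmin^2 - a) = 0 by rw [ha2]; ring,
    show (2*rmin^2 - a - b)/(b-a) = -1 by rw [ha2, div_eq_iff hba.ne']; ring,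
    show ((a+b)*rmin^2 - 2*a*b)/((b-a)*rmin^2) = -1 by
      rw [ha2, div_eq_iff (by positivity)]; ring,
    Real.arcsin_one, Real.arcsin_neg_one, Real.sqrt_zero]
  ring

/-- The radial action integral of the regularized rotating Kepler problem
evaluates to (K+1)/√(-G-2C) - |G|/2. -/
theorem radial_action_integral
    (K G C rmin rmax : ℝ)
    (hG : G ≠ 0) (hC : C < 0)
    (h1 : G + 2*C < 0) (h2 : 0 < K + 1)
    (h3 : 0 < (K + 1)^2 + G^2*(G + 2*C)/4)
    (hrmin : 0 < rmin) (hlt : rmin < rmax)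
    (hsum : rmin^2 + rmax^2 = 2*(K + 1)/(-G - 2*C))
    (hprod : rmin^2 * rmax^2 = G^2/(4*(-G - 2*C))) :
    (1/π) * ∫ r in rmin..rmax,
        Real.sqrt (8*K + 8 - G^2/r^2 + 4*r^2*(G + 2*C))
      = (K + 1)/Real.sqrt (-G - 2*C) - |G|/2 := by
  have hrmax : 0 < rmax := hrmin.trans hlt
  obtain ⟨D, hD_def⟩ : ∃ D, D = -G - 2*C := ⟨_, rfl⟩
  rw [← hD_def] at hsum hprod ⊢
  have hD : 0 < D := by rw [hD_def]; linarith
  have hsD : Real.sqrt D ^ 2 = D := Real.sq_sqrt hD.le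
  have hsDpos : 0 < Real.sqrt D := Real.sqrt_pos.mpr hD
  have hab : rmin^2 < rmax^2 := pow_lt_pow_left₀ hlt hrmin.le two_ne_zero
  have heq : ∀ r ∈ Set.uIcc rmin rmax,
      Real.sqrt (8*K + 8 - G^2/r^2 + 4*r^2*(G + 2*C))
        = (2*Real.sqrt D) * (Real.sqrt ((rmax^2 - r^2)*(r^2 - rmin^2))/r) := by
    intro r hr
    rw [Set.uIcc_of_le hlt.le] at hr
    have hr0 : 0 < r := lt_of_lt_of_le hrmin hr.1
    have hra : rmin^2 ≤ r^2 := pow_le_pow_left₀ hrmin.le hr.1 2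
    have hrb : r^2 ≤ rmax^2 := pow_le_pow_left₀ hr0.le hr.2 2
    have hM : 0 ≤ (rmax^2 - r^2)*(r^2 - rmin^2) := mul_nonneg (by linarith) (by linarith)
    have hMq : Real.sqrt ((rmax^2 - r^2)*(r^2 - rmin^2)) ^ 2
        = (rmax^2 - r^2)*(r^2 - rmin^2) := Real.sq_sqrt hM
    have hinner : 8*K + 8 - G^2/r^2 + 4*r^2*(G + 2*C)
        = 4*D*((rmax^2 - r^2)*(r^2 - rmin^2))/r^2 := by
      field_simp at hsum hprod ⊢
      linear_combination (-4*r^2)*hsum + hprod + 4*r^4*hD_def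
    rw [hinner, show 4*D*((rmax^2 - r^2)*(r^2 - rmin^2))/r^2
        = ((2*Real.sqrt D) * (Real.sqrt ((rmax^2 - r^2)*(r^2 - rmin^2))/r))^2 by
      rw [mul_pow, mul_pow, div_pow, hMq, hsD]; ring]
    exact Real.sqrt_sq (by positivity)
  rw [intervalIntegral.integral_congr heq, intervalIntegral.integral_const_mul,
    sqrtP_integral (rmin^2) (rmax^2) (Real.sqrt (rmin^2*rmax^2)) rmin rmax hrmin hlt
      rfl rfl (by positivity) rfl]
  have habG : Real.sqrt (rmin^2*rmax^2) = |G|/(2*Real.sqrt D) := by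
    rw [show rmin^2*rmax^2 = (|G|/(2*Real.sqrt D))^2 by
      rw [div_pow, mul_pow, hsD, sq_abs, hprod]; ring]
    exact Real.sqrt_sq (by positivity)
  rw [habG, hsum]
  have hpi : (π : ℝ) ≠ 0 := Real.pi_ne_zero
  field_simp
  ring_nf
  linear_combination (2 + 2*K) * hsD
end
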